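/- arXiv:1602.08365 — 3 statements merged into one kernel-verified Lean document; each statement's English description precedes it below -/
import Mathlib

section
/- Let 𝐦 = (m_0,…,m_r) and 𝐧 = (n_0,…,n_r) be strictly increasing (r+1)-tuples of nonnegative integers. Then S_{𝐦,𝐧} is a vector space of dimension dim(S_{𝐦,𝐧}) = Σ_{k=0}^r (m_k − m_{k−1})·(n_{r−k} + 1), where m_{−1} := −1. -/
open scoped BigOperators

noncomputable section

/-- Sup norm `‖f‖_{∞,S}` of a function over a set `S`. -/
def supN {α : Type*} (S : Set α) (f : α → ℝ) : ℝ := ⨆ z : S, |f z.1|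

/-- Operator norm of `L` over continuous functions on `R` with sup norm `≤ 1`. -/
def opN {α : Type*} [TopologicalSpace α] (R : Set α) (L : (α → ℝ) → α → ℝ) : ℝ :=
  ⨆ G : {G : α → ℝ // ContinuousOn G R ∧ supN R G ≤ 1}, supN R (L G.1)

/-- Bernstein basis function `B_i^m` scaled to `[a,b]`. -/
def bern (m : ℕ) (a b : ℝ) (i : ℕ) : ℝ → ℝ := fun x =>
  (m.choose i : ℝ) * ((b - x) / (b - a)) ^ (m - i) * ((x - a) / (b - a)) ^ i

/-- Uniform node `x_i^m = a + (i/m)(b-a)`. -/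
def node (m : ℕ) (a b : ℝ) (i : ℕ) : ℝ := a + (i : ℝ) / (m : ℝ) * (b - a)

/-- Bernstein collocation matrix `T_m = (B_j^m(x_i^m))_{ij}`. -/
def Tmat (m : ℕ) (a b : ℝ) : Matrix (Fin (m + 1)) (Fin (m + 1)) ℝ := fun i j =>
  bern m a b j (node m a b i)

/-- Dual functionals `λ_j^m f = (T_m⁻¹ · (f(x_i^m))_i)_j`. -/
def lam (m : ℕ) (a b : ℝ) (j : Fin (m + 1)) (f : ℝ → ℝ) : ℝ :=
  (Tmat m a b)⁻¹.mulVec (fun i => f (node m a b i)) j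

/-- `λ_j^m` with a natural-number index (zero out of range). -/
def lamN (m : ℕ) (a b : ℝ) (j : ℕ) (f : ℝ → ℝ) : ℝ :=
  if h : j < m + 1 then lam m a b ⟨j, h⟩ f else 0

/-- The index map `α^k : i ↦ i·(m_r/m_k)` (when `m_k ∣ m_r` and `i ≤ m_k` the `min` is inert). -/
def alphaF (mk mr : ℕ) (i : Fin (mk + 1)) : Fin (mr + 1) :=
  ⟨min (i.1 * (mr / mk)) mr, Nat.lt_succ_of_le (min_le_right _ _)⟩

/-- Degree elevation matrix `E_{m_k}^{m_r} = (λ_i^{m_r}(B_j^{m_k}))_{ij}`. -/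
def Emat (mk mr : ℕ) (a b : ℝ) : Matrix (Fin (mr + 1)) (Fin (mk + 1)) ℝ := fun i j =>
  lam mr a b i (bern mk a b j)

/-- Row submatrix `E_{m_k}^{m_r}(α^k,:)`. -/
def Esub (mk mr : ℕ) (a b : ℝ) : Matrix (Fin (mk + 1)) (Fin (mk + 1)) ℝ := fun i j =>
  Emat mk mr a b (alphaF mk mr i) j

/-- Dual basis polynomials `D_j^{m_k} = Σ_ℓ (E(α^k,:)⁻¹)_{ℓ j} B_ℓ^{m_k}`. -/
def Dq (mk mr : ℕ) (a b : ℝ) (j : Fin (mk + 1)) : ℝ → ℝ := fun x =>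
  ∑ l : Fin (mk + 1), (Esub mk mr a b)⁻¹ l j * bern mk a b l x

/-- `D_j^{m_k}` with a natural-number index (zero out of range). -/
def DqN (mk mr : ℕ) (a b : ℝ) (j : ℕ) : ℝ → ℝ :=
  if h : j < mk + 1 then Dq mk mr a b ⟨j, h⟩ else 0

/-- Functionals `μ_i^{m_k} = λ_{α^k_i}^{m_r}`. -/
def mu (mk mr : ℕ) (a b : ℝ) (i : Fin (mk + 1)) (f : ℝ → ℝ) : ℝ :=
  lam mr a b (alphaF mk mr i) f

/-- Univariate quasi-interpolant `P_{m_k} f = Σ_i (μ_i^{m_k} f)·D_i^{m_k}`. -/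
def Pop (mk mr : ℕ) (a b : ℝ) (f : ℝ → ℝ) : ℝ → ℝ := fun x =>
  ∑ i : Fin (mk + 1), mu mk mr a b i f * Dq mk mr a b i x

/-- Bivariate extension `𝐏_{m_k} = P_{m_k} × I` (acting in the first variable). -/
def PP (mk mr : ℕ) (a b : ℝ) (F : ℝ × ℝ → ℝ) : ℝ × ℝ → ℝ := fun z =>
  Pop mk mr a b (fun x => F (x, z.2)) z.1

/-- Bivariate extension `𝐐_{n_ℓ} = I × Q_{n_ℓ}` (acting in the second variable). -/
def QQ (nl nr : ℕ) (c d : ℝ) (F : ℝ × ℝ → ℝ) : ℝ × ℝ → ℝ := fun z =>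
  Pop nl nr c d (fun y => F (z.1, y)) z.2

/-- Maximum absolute row sum matrix norm. -/
def rowNorm {p q : ℕ} (A : Matrix (Fin p) (Fin q) ℝ) : ℝ := ⨆ i : Fin p, ∑ j, |A i j|

/-- `C_{m_r} = max_i sup{ |λ_i^{m_r} f| : f ∈ C[a,b], ‖f‖_∞ ≤ 1 }`. -/
def Cbase (mr : ℕ) (a b : ℝ) : ℝ :=
  ⨆ i : Fin (mr + 1),
    ⨆ f : {f : ℝ → ℝ // ContinuousOn f (Set.Icc a b) ∧ supN (Set.Icc a b) f ≤ 1},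
      |lam mr a b i f.1|

/-- `C_{m_r,m_k} = C_{m_r}·(m_k+1)·‖E_{m_k}^{m_r}(α^k,:)⁻¹‖_∞`. -/
def Cconst (mk mr : ℕ) (a b : ℝ) : ℝ :=
  Cbase mr a b * ((mk : ℝ) + 1) * rowNorm (Esub mk mr a b)⁻¹

/-- `Π_m`: univariate polynomial functions of degree at most `m`. -/
def polyF (m : ℕ) : Submodule ℝ (ℝ → ℝ) :=
  Submodule.span ℝ {f : ℝ → ℝ | ∃ i ≤ m, f = fun x => x ^ i}

/-- `Π_p ⊗ Π_q`: bivariate polynomial functions of degree `≤ p` in `x` and `≤ q` in `y`. -/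
def polyF2 (p q : ℕ) : Submodule ℝ (ℝ × ℝ → ℝ) :=
  Submodule.span ℝ {F : ℝ × ℝ → ℝ | ∃ i ≤ p, ∃ j ≤ q, F = fun z => z.1 ^ i * z.2 ^ j}

/-- `S_{𝐦,𝐧} = Σ_{k=0}^r Π_{m_k} ⊗ Π_{n_{r-k}}` (as a space of functions). -/
def SmnF (r : ℕ) (m n : ℕ → ℕ) : Submodule ℝ (ℝ × ℝ → ℝ) :=
  ∑ k ∈ Finset.range (r + 1), polyF2 (m k) (n (r - k))

/-- `Π_p ⊗ Π_q` inside the bivariate polynomial ring. -/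
def PiTP (p q : ℕ) : Submodule ℝ (MvPolynomial (Fin 2) ℝ) :=
  Submodule.span ℝ {P | ∃ i ≤ p, ∃ j ≤ q,
    P = MvPolynomial.monomial (Finsupp.single 0 i + Finsupp.single 1 j) (1 : ℝ)}

/-- `S_{𝐦,𝐧} = Σ_{k=0}^r Π_{m_k} ⊗ Π_{n_{r-k}}` in the bivariate polynomial ring. -/
def SmnP (r : ℕ) (m n : ℕ → ℕ) : Submodule ℝ (MvPolynomial (Fin 2) ℝ) :=
  ∑ k ∈ Finset.range (r + 1), PiTP (m k) (n (r - k))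

/-- The rectangle `[a,b] × [c,d]`. -/
def Rect (a b c d : ℝ) : Set (ℝ × ℝ) := Set.Icc a b ×ˢ Set.Icc c d

/-- `Fd` is a system of mixed partial derivatives of `Fd 0 0` of class `C^{p,q}` on the
rectangle: all mixed partials `F^{(i,j)}`, `i ≤ p`, `j ≤ q`, exist and are continuous. -/
def IsCpq (p q : ℕ) (a b c d : ℝ) (Fd : ℕ → ℕ → ℝ × ℝ → ℝ) : Prop :=
  (∀ i < p, ∀ j ≤ q, ∀ z ∈ Rect a b c d,
      HasDerivWithinAt (fun x => Fd i j (x, z.2)) (Fd (i + 1) j z) (Set.Icc a b) z.1) ∧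
  (∀ i ≤ p, ∀ j < q, ∀ z ∈ Rect a b c d,
      HasDerivWithinAt (fun y => Fd i j (z.1, y)) (Fd i (j + 1) z) (Set.Icc c d) z.2) ∧
  (∀ i ≤ p, ∀ j ≤ q, ContinuousOn (Fd i j) (Rect a b c d))

end


namespace Stmt1Aux

open MvPolynomial Submodule

/-- The monomial `x^i y^j` as an element of `MvPolynomial (Fin 2) ℝ`. -/
noncomputable def g : ℕ × ℕ → MvPolynomial (Fin 2) ℝ :=
  fun p => MvPolynomial.monomial (Finsupp.single 0 p.1 + Finsupp.single 1 p.2) (1 : ℝ)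

lemma expmap_inj :
    Function.Injective (fun p : ℕ × ℕ =>
      Finsupp.single (0 : Fin 2) p.1 + Finsupp.single (1 : Fin 2) p.2) := by
  intro p q h
  have h0 := DFunLike.congr_fun h (0 : Fin 2)
  have h1 := DFunLike.congr_fun h (1 : Fin 2)
  simp [Finsupp.single_apply, show (0 : Fin 2) ≠ 1 by decide,
    show (1 : Fin 2) ≠ 0 by decide] at h0 h1
  exact Prod.ext h0 h1

lemma g_inj : Function.Injective g := by
  intro p q h
  exact expmap_inj (MvPolynomial.monomial_left_injective (one_ne_zero (α := ℝ)) h)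

lemma g_li : LinearIndependent ℝ g := by
  have hb := (MvPolynomial.basisMonomials (Fin 2) ℝ).linearIndependent
  have := hb.comp
    (fun p : ℕ × ℕ => Finsupp.single (0 : Fin 2) p.1 + Finsupp.single (1 : Fin 2) p.2)
    expmap_inj
  have hcoe : (⇑(MvPolynomial.basisMonomials (Fin 2) ℝ) ∘
      fun p : ℕ × ℕ => Finsupp.single (0 : Fin 2) p.1 + Finsupp.single (1 : Fin 2) p.2) = g := by
    funext p
    simp [g, MvPolynomial.coe_basisMonomials]
  rwa [hcoe] at this

lemma PiTP_eq (p q : ℕ) :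
    PiTP p q = span ℝ (g '' {x : ℕ × ℕ | x.1 ≤ p ∧ x.2 ≤ q}) := by
  unfold PiTP
  congr 1
  ext P
  constructor
  · rintro ⟨i, hi, j, hj, rfl⟩
    exact ⟨(i, j), ⟨hi, hj⟩, rfl⟩
  · rintro ⟨⟨i, j⟩, ⟨hi, hj⟩, rfl⟩
    exact ⟨i, hi, j, hj, rfl⟩

lemma sum_span_eq {ι : Type*} (s : Finset ι) (A : ι → Set (MvPolynomial (Fin 2) ℝ)) :
    ∑ k ∈ s, span ℝ (A k) = span ℝ (⋃ k ∈ s, A k) := by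
  classical
  induction s using Finset.induction_on with
  | empty => simp
  | insert _ _ ha ih =>
    rw [Finset.sum_insert ha, ih, Submodule.add_eq_sup, ← Submodule.span_union,
      Finset.set_biUnion_insert]

lemma mono_aux {f : ℕ → ℕ} {r : ℕ} (h : ∀ k < r, f k < f (k + 1)) :
    ∀ {j k : ℕ}, j ≤ k → k ≤ r → f j ≤ f k := by
  intro j k hjk
  induction hjk with
  | refl => intro _; exact le_refl _
  | @step k hjk ih =>
      intro hkr
      exact le_trans (ih (by omega)) (le_of_lt (h k (by omega)))

end Stmt1Aux

/-- Dimension of `S_{𝐦,𝐧}` for strictly increasing `𝐦, 𝐧`: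
`dim S_{𝐦,𝐧} = Σ_{k=0}^r (m_k − m_{k−1})(n_{r−k}+1)` with `m_{−1} := −1`. -/
theorem stmt1 (r : ℕ) (m n : ℕ → ℕ)
    (hm : ∀ k < r, m k < m (k + 1)) (hn : ∀ k < r, n k < n (k + 1)) :
    Module.finrank ℝ ↥(SmnP r m n) =
      ∑ k ∈ Finset.range (r + 1),
        (if k = 0 then m 0 + 1 else m k - m (k - 1)) * (n (r - k) + 1) := by
  classical
  open Stmt1Aux Submodule in
  -- the staircase index set
  set blk : ℕ → Finset ℕ := fun k =>
    if k = 0 then Finset.range (m 0 + 1) else Finset.Ioc (m (k - 1)) (m k) with hblk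
  set DF : Finset (ℕ × ℕ) :=
    (Finset.range (r + 1)).biUnion (fun k => blk k ×ˢ Finset.range (n (r - k) + 1)) with hDF
  have hblk_le : ∀ k i, i ∈ blk k → i ≤ m k := by
    intro k i hi
    by_cases hk : k = 0
    · subst hk; simp [hblk] at hi; omega
    · simp [hblk, hk, Finset.mem_Ioc] at hi; exact hi.2
  -- the union of the rectangles equals the staircase
  have hset : (⋃ k ∈ Finset.range (r + 1),
      {x : ℕ × ℕ | x.1 ≤ m k ∧ x.2 ≤ n (r - k)}) = (↑DF : Set (ℕ × ℕ)) := by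
    ext ⟨i, j⟩
    simp only [Set.mem_iUnion, Set.mem_setOf_eq, Finset.coe_biUnion, Finset.mem_coe,
      Finset.mem_range, Finset.mem_biUnion, Finset.mem_product, hDF,
      Finset.mem_range, exists_prop]
    constructor
    · rintro ⟨k, hk, hi, hj⟩
      have hex : ∃ t, i ≤ m t := ⟨k, hi⟩
      have ht : i ≤ m (Nat.find hex) := Nat.find_spec hex
      have htk : Nat.find hex ≤ k := Nat.find_min' hex hi
      refine ⟨Nat.find hex, by omega, ?_, ?_⟩
      · by_cases h0 : Nat.find hex = 0
        · rw [h0] at ht ⊢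
          simp [hblk]; omega
        · have hlt : ¬ i ≤ m (Nat.find hex - 1) := Nat.find_min hex (by omega)
          simp [hblk, h0, Finset.mem_Ioc]
          exact ⟨by omega, ht⟩
      · have h1 : n (r - k) ≤ n (r - Nat.find hex) :=
          mono_aux hn (by omega) (by omega)
        omega
    · rintro ⟨k, hk, hi, hj⟩
      exact ⟨k, hk, hblk_le k i hi, by omega⟩
  -- SmnP equals the span of the monomials of the staircase
  have hspan : SmnP r m n = span ℝ ((DF.image g : Finset (MvPolynomial (Fin 2) ℝ)) :
      Set (MvPolynomial (Fin 2) ℝ)) := by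
    unfold SmnP
    have h1 : ∀ k, PiTP (m k) (n (r - k)) =
        span ℝ (g '' {x : ℕ × ℕ | x.1 ≤ m k ∧ x.2 ≤ n (r - k)}) := fun k => PiTP_eq _ _
    calc ∑ k ∈ Finset.range (r + 1), PiTP (m k) (n (r - k))
        = ∑ k ∈ Finset.range (r + 1),
            span ℝ (g '' {x : ℕ × ℕ | x.1 ≤ m k ∧ x.2 ≤ n (r - k)}) := by
          exact Finset.sum_congr rfl fun k _ => h1 k
      _ = span ℝ (⋃ k ∈ Finset.range (r + 1),
            g '' {x : ℕ × ℕ | x.1 ≤ m k ∧ x.2 ≤ n (r - k)}) := sum_span_eq _ _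
      _ = span ℝ (g '' (⋃ k ∈ Finset.range (r + 1),
            {x : ℕ × ℕ | x.1 ≤ m k ∧ x.2 ≤ n (r - k)})) := by
          rw [Set.image_iUnion₂]
      _ = span ℝ (g '' (↑DF : Set (ℕ × ℕ))) := by rw [hset]
      _ = _ := by rw [Finset.coe_image]
  rw [hspan]
  -- linear independence of the monomials
  have hli : LinearIndependent ℝ
      ((↑) : ((DF.image g : Finset (MvPolynomial (Fin 2) ℝ)) : Set (MvPolynomial (Fin 2) ℝ)) →
        MvPolynomial (Fin 2) ℝ) := by
    have h1 : LinearIndependent ℝ (fun x : (↑DF : Set (ℕ × ℕ)) => g x) :=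
      g_li.comp _ Subtype.coe_injective
    have h2 := LinearIndepOn.id_image (v := g) (s := (↑DF : Set (ℕ × ℕ))) h1
    rw [Finset.coe_image]
    exact h2
  rw [finrank_span_finset_eq_card hli, Finset.card_image_of_injective _ g_inj]
  -- count the staircase
  have hdisj : ∀ k ∈ Finset.range (r + 1), ∀ k' ∈ Finset.range (r + 1), k ≠ k' →
      Disjoint ((fun k => blk k ×ˢ Finset.range (n (r - k) + 1)) k)
        ((fun k => blk k ×ˢ Finset.range (n (r - k) + 1)) k') := by
    have key : ∀ k k', k < k' → k' ≤ r → ∀ i, i ∈ blk k → i ∈ blk k' → False := by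
      intro k k' hkk' hk'r i hik hik'
      have h1 : i ≤ m k := hblk_le k i hik
      have hk'0 : k' ≠ 0 := by omega
      simp [hblk, hk'0, Finset.mem_Ioc] at hik'
      have h2 : m k ≤ m (k' - 1) := mono_aux hm (by omega) (by omega)
      omega
    intro k hk k' hk' hne
    simp only [Finset.mem_range] at hk hk'
    rw [Finset.disjoint_left]
    rintro ⟨i, j⟩ h1 h2
    rw [Finset.mem_product] at h1 h2
    rcases Nat.lt_or_ge k k' with h | h
    · exact key k k' h (by omega) i h1.1 h2.1
    · exact key k' k (by omega) (by omega) i h2.1 h1.1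
  rw [hDF, Finset.card_biUnion hdisj]
  refine Finset.sum_congr rfl fun k hk => ?_
  simp only [Finset.mem_range] at hk
  rw [Finset.card_product, Finset.card_range]
  congr 1
  by_cases h0 : k = 0
  · subst h0; simp [hblk]
  · have : m (k - 1) < m k := by
      have := hm (k - 1) (by omega)
      have hk1 : k - 1 + 1 = k := by omega
      rwa [hk1] at this
    simp [hblk, h0, Nat.card_Ioc]
end

section
/- For all 0 ≤ ℓ ≤ k ≤ r, the quasi-interpolation operators satisfy P_{m_k} P_{m_ℓ} = P_{m_ℓ} = P_{m_ℓ} P_{m_k} (as operators on C[a,b], where the composition is well-defined since each P maps into polynomials, which are continuous), and likewise Q_{n_k} Q_{n_ℓ} = Q_{n_ℓ} = Q_{n_ℓ} Q_{n_k} on C[c,d]. -/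
open scoped BigOperators

noncomputable section AuxChain
open Polynomial


open Finset in
lemma det_rows_add {p : ℕ} (u v : Fin p → Fin p → ℝ) :
    (Matrix.of fun i j => u i j + v i j).det
      = ∑ T : Finset (Fin p), (Matrix.of fun i j => if i ∈ T then v i j else u i j).det := by
  classical
  simp_rw [Matrix.det_apply]
  rw [Finset.sum_comm]
  refine Finset.sum_congr rfl fun σ _ => ?_
  have hexp : (∏ i, (Matrix.of fun i j => u i j + v i j) (σ i) i)
      = ∑ S ∈ (Finset.univ : Finset (Fin p)).powerset,
          (∏ i ∈ S, u (σ i) i) * ∏ i ∈ Finset.univ \ S, v (σ i) i := by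
    simpa using Finset.prod_add (fun i => u (σ i) i) (fun i => v (σ i) i) Finset.univ
  rw [hexp, Finset.powerset_univ, Finset.smul_sum]
  have hbij : Function.Bijective (fun S : Finset (Fin p) => Finset.image σ Sᶜ) := by
    have hinj : Function.Injective (fun S : Finset (Fin p) => Finset.image σ Sᶜ) := by
      intro S S' h
      have := Finset.image_injective (Equiv.injective σ) h
      simpa using congrArg compl this
    exact (Finite.injective_iff_bijective).mp hinj
  refine Fintype.sum_bijective _ hbij _ _ fun S => ?_
  congr 1
  have hmem : ∀ i : Fin p, (σ i ∈ Finset.image σ Sᶜ) ↔ i ∉ S := by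
    intro i
    simp [Finset.mem_image, Equiv.injective σ |>.eq_iff]
  have : (∏ i, (Matrix.of fun i j => if i ∈ Finset.image σ Sᶜ then v i j else u i j) (σ i) i)
      = ∏ i, (if i ∈ S then u (σ i) i else v (σ i) i) := by
    refine Finset.prod_congr rfl fun i _ => ?_
    by_cases h : i ∈ S <;> simp [Matrix.of_apply, hmem i, h]
  rw [this, ← Finset.prod_filter_mul_prod_filter_not Finset.univ (· ∈ S)]
  congr 1
  · have h1 : Finset.univ.filter (· ∈ S) = S := by ext i; simp
    rw [h1]; exact Finset.prod_congr rfl fun i hi => by simp [hi]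
  · have h2 : Finset.univ.filter (fun i => ¬ i ∈ S) = Finset.univ \ S := by ext i; simp
    rw [h2]; exact Finset.prod_congr rfl fun i hi => by simp [(Finset.mem_sdiff.mp hi).2]

def ent (N r j : ℕ) : ℝ := if j ≤ r then ((N.choose (r - j) : ℕ) : ℝ) else 0

lemma ent_zero (r j : ℕ) : ent 0 r j = if r = j then 1 else 0 := by
  unfold ent
  rcases Nat.lt_trichotomy r j with h | h | h
  · rw [if_neg (by omega), if_neg (by omega)]
  · simp [h]
  · rw [if_pos (by omega), if_neg (by omega), Nat.choose_eq_zero_of_lt (by omega)]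
    simp

lemma ent_succ (N r j : ℕ) :
    ent (N + 1) r j = ent N r j + (if 1 ≤ r then ent N (r - 1) j else 0) := by
  unfold ent
  rcases Nat.lt_or_ge r 1 with h | h
  · have : r = 0 := by omega
    subst this
    rw [if_neg (by omega : ¬ (1:ℕ) ≤ 0), add_zero]
    rcases Nat.eq_zero_or_pos j with h0 | h0
    · subst h0; simp
    · rw [if_neg (by omega), if_neg (by omega)]
  · rw [if_pos h]
    rcases Nat.lt_trichotomy j r with h1 | h1 | h1
    · rw [if_pos (by omega), if_pos (by omega), if_pos (by omega)]
      have hr : r - j = (r - 1 - j) + 1 := by omega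
      rw [hr, Nat.choose_succ_succ' N (r - 1 - j)]
      push_cast
      ring
    · subst h1
      rw [if_pos le_rfl, if_pos le_rfl, if_neg (by omega)]
      simp
    · rw [if_neg (by omega), if_neg (by omega), if_neg (by omega)]
      simp

/-- Strict monotone `Fin p → ℕ` grows at least like the index. -/
lemma sm_gap {p : ℕ} {R : Fin p → ℕ} (h : StrictMono R) :
    ∀ d : ℕ, ∀ i j : Fin p, i.1 + d = j.1 → R i + d ≤ R j := by
  intro d
  induction d with
  | zero => intro i j hij; have : i = j := Fin.ext (by omega); subst this; omega
  | succ d ih =>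
      intro i j hij
      have hj1 : j.1 - 1 < p := by omega
      have h1 : (⟨j.1 - 1, hj1⟩ : Fin p) < j := by
        rw [Fin.lt_def]; exact (by omega : j.1 - 1 < j.1)
      have h2 := h h1
      have h3 := ih i ⟨j.1 - 1, hj1⟩ (show i.1 + d = j.1 - 1 by omega)
      omega

lemma sm_le {p : ℕ} {R : Fin p → ℕ} (h : StrictMono R) (i : Fin p) : i.1 ≤ R i := by
  have h0 : (⟨0, i.pos⟩ : Fin p).1 + i.1 = i.1 := by simp
  have := sm_gap h i.1 ⟨0, i.pos⟩ i h0
  omega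

def Amat {p : ℕ} (N : ℕ) (R : Fin p → ℕ) : Matrix (Fin p) (Fin p) ℝ :=
  Matrix.of fun i j => ent N (R i) j.1

def mixM {p : ℕ} (N : ℕ) (R : Fin p → ℕ) (T : Finset (Fin p)) : Matrix (Fin p) (Fin p) ℝ :=
  Matrix.of fun i j => if i ∈ T then (if 1 ≤ R i then ent N (R i - 1) j.1 else 0)
    else ent N (R i) j.1

lemma det_expand {p : ℕ} (N : ℕ) (R : Fin p → ℕ) :
    (Amat (N + 1) R).det = ∑ T : Finset (Fin p), (mixM N R T).det := by
  have : Amat (N + 1) R = Matrix.of fun i j =>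
      ent N (R i) j.1 + (if 1 ≤ R i then ent N (R i - 1) j.1 else 0) := by
    ext i j; exact ent_succ N (R i) j.1
  rw [this, det_rows_add]
  rfl

lemma amat_zero_nonneg {p : ℕ} (R : Fin p → ℕ) (hR : StrictMono R) :
    0 ≤ (Amat 0 R).det ∧ ((∀ i : Fin p, R i = i.1) → 1 ≤ (Amat 0 R).det) := by
  constructor
  · by_cases hid : ∀ i : Fin p, R i = i.1
    · have : Amat 0 R = 1 := by
        ext i j
        rw [Amat, Matrix.of_apply, ent_zero, hid i, Matrix.one_apply]
        by_cases h : i = j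
        · subst h; simp
        · rw [if_neg (fun hh => h (Fin.ext hh)), if_neg h]
      rw [this, Matrix.det_one]; norm_num
    · push_neg at hid
      obtain ⟨i0, hi0⟩ := hid
      have hlast : p - 1 < p := by omega
      have hge : p ≤ R ⟨p - 1, hlast⟩ := by
        have h1 := sm_le hR i0
        have h2 := sm_gap hR (p - 1 - i0.1) i0 ⟨p - 1, hlast⟩ (by simp; omega)
        have := i0.2
        omega
      have : (Amat 0 R).det = 0 := by
        apply Matrix.det_eq_zero_of_row_eq_zero ⟨p - 1, hlast⟩
        intro j
        rw [Amat, Matrix.of_apply, ent_zero, if_neg (by have := j.2; omega)]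
      rw [this]
  · intro hid
    have : Amat 0 R = 1 := by
      ext i j
      rw [Amat, Matrix.of_apply, ent_zero, hid i, Matrix.one_apply]
      by_cases h : i = j
      · subst h; simp
      · rw [if_neg (fun hh => h (Fin.ext hh)), if_neg h]
    rw [this, Matrix.det_one]

lemma mix_nonneg {p : ℕ} (N : ℕ)
    (ih : ∀ R : Fin p → ℕ, StrictMono R → 0 ≤ (Amat N R).det)
    (R : Fin p → ℕ) (hR : StrictMono R) (T : Finset (Fin p)) :
    0 ≤ (mixM N R T).det := by
  by_cases hz : ∃ i ∈ T, R i = 0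
  · obtain ⟨i0, hiT, hi0⟩ := hz
    have : (mixM N R T).det = 0 := by
      apply Matrix.det_eq_zero_of_row_eq_zero i0
      intro j
      rw [mixM, Matrix.of_apply, if_pos hiT, if_neg (by omega)]
    rw [this]
  · push_neg at hz
    set R' : Fin p → ℕ := fun i => if i ∈ T then R i - 1 else R i with hR'
    have hmix : mixM N R T = Amat N R' := by
      ext i j
      rw [mixM, Matrix.of_apply, Amat, Matrix.of_apply, hR']
      by_cases h : i ∈ T
      · rw [if_pos h]
        simp only []
        rw [if_pos h, if_pos (by have := hz i h; omega : 1 ≤ R i)]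
      · rw [if_neg h]
        simp only []
        rw [if_neg h]
    rw [hmix]
    have hmono : Monotone R' := by
      intro i j hij
      rcases eq_or_lt_of_le hij with h | h
      · subst h; exact le_rfl
      · have h1 := hR h
        simp only [hR']
        by_cases h2 : i ∈ T <;> by_cases h3 : j ∈ T <;> simp [h2, h3] <;> omega
    by_cases hinj : Function.Injective R'
    · exact ih R' (hmono.strictMono_of_injective hinj)
    · rw [Function.not_injective_iff] at hinj
      obtain ⟨i, j, hij, hne⟩ := hinj
      have : (Amat N R').det = 0 := by
        apply Matrix.det_zero_of_row_eq hne
        funext c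
        rw [Amat, Matrix.of_apply, Matrix.of_apply, hij]
      rw [this]

lemma amat_nonneg {p : ℕ} : ∀ N : ℕ, ∀ R : Fin p → ℕ, StrictMono R → 0 ≤ (Amat N R).det := by
  intro N
  induction N with
  | zero => intro R hR; exact (amat_zero_nonneg R hR).1
  | succ N ih =>
      intro R hR
      rw [det_expand]
      exact Finset.sum_nonneg fun T _ => mix_nonneg N ih R hR T

lemma amat_step {p : ℕ} (N : ℕ) (R R' : Fin p → ℕ) (hR : StrictMono R) (hR' : StrictMono R')
    (h1 : ∀ i, R' i ≤ R i) (h2 : ∀ i, R i ≤ R' i + 1) :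
    (Amat N R').det ≤ (Amat (N + 1) R).det := by
  classical
  rw [det_expand]
  set T0 : Finset (Fin p) := Finset.univ.filter (fun i => R i = R' i + 1) with hT0
  have hmix : mixM N R T0 = Amat N R' := by
    ext i j
    rw [mixM, Matrix.of_apply, Amat, Matrix.of_apply]
    by_cases h : i ∈ T0
    · have hi : R i = R' i + 1 := by
        have := Finset.mem_filter.mp h; exact this.2
      rw [if_pos h, if_pos (by omega)]
      congr 1
      omega
    · have hi : R i ≠ R' i + 1 := by
        intro hh; exact h (Finset.mem_filter.mpr ⟨Finset.mem_univ i, hh⟩)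
      rw [if_neg h]
      congr 1
      have := h1 i; have := h2 i
      omega
  calc (Amat N R').det = (mixM N R T0).det := by rw [hmix]
    _ ≤ ∑ T : Finset (Fin p), (mixM N R T).det := by
        apply Finset.single_le_sum (f := fun T => (mixM N R T).det)
          (fun T _ => mix_nonneg N (amat_nonneg N) R hR T) (Finset.mem_univ T0)

lemma Rt_sm (mk q t : ℕ) (hq : 1 ≤ q) :
    StrictMono (fun i : Fin (mk + 1) => max i.1 (i.1 * q - t)) := by
  intro i j hij
  have h1 : i.1 < j.1 := hij
  have h2 : i.1 * q + q ≤ j.1 * q := by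
    calc i.1 * q + q = (i.1 + 1) * q := by ring
    _ ≤ j.1 * q := Nat.mul_le_mul_right q h1
  simp only []
  omega

lemma amat_pos (mk q : ℕ) (hq : 1 ≤ q) :
    (1 : ℝ) ≤ (Amat (mk * (q - 1)) (fun i : Fin (mk + 1) => i.1 * q)).det := by
  set N := mk * (q - 1) with hN
  have key : ∀ d, d ≤ N →
      (1 : ℝ) ≤ (Amat d (fun i : Fin (mk + 1) => max i.1 (i.1 * q - (N - d)))).det := by
    intro d
    induction d with
    | zero =>
        intro _
        have hfun : (fun i : Fin (mk + 1) => max i.1 (i.1 * q - (N - 0))) = fun i => i.1 := by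
          funext i
          have hle : i.1 ≤ mk := Nat.lt_succ_iff.mp i.2
          have h1 : i.1 * (q - 1) ≤ mk * (q - 1) := Nat.mul_le_mul_right _ hle
          have h2 : i.1 * (q - 1) + i.1 = i.1 * q := by
            rw [← Nat.mul_succ]
            congr 1
            omega
          omega
        rw [hfun]
        exact (amat_zero_nonneg _ (fun i j hij => hij)).2 (fun i => rfl)
    | succ d ih =>
        intro hd
        refine le_trans (ih (by omega)) (amat_step d _ _
          (Rt_sm mk q (N - (d + 1)) hq) (Rt_sm mk q (N - d) hq) (fun i => by omega)
          (fun i => by omega))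
  have hfun : (fun i : Fin (mk + 1) => max i.1 (i.1 * q - (N - N))) = fun i => i.1 * q := by
    funext i
    have : i.1 ≤ i.1 * q := Nat.le_mul_of_pos_right _ hq
    omega
  have := key N le_rfl
  rw [hfun] at this
  exact this





lemma bp_eval (n ν : ℕ) (s : ℝ) : (bernsteinPolynomial ℝ n ν).eval s
    = (n.choose ν : ℝ) * s ^ ν * (1 - s) ^ (n - ν) := by
  simp [bernsteinPolynomial]

lemma bern_eval {a b : ℝ} (hab : a < b) (m i : ℕ) (x : ℝ) :
    bern m a b i x = (bernsteinPolynomial ℝ m i).eval ((x - a) / (b - a)) := by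
  have hba : b - a ≠ 0 := by linarith
  rw [bp_eval, bern]
  have h1 : 1 - (x - a) / (b - a) = (b - x) / (b - a) := by
    field_simp
    ring
  rw [h1]
  ring

lemma node_s {a b : ℝ} (hab : a < b) (m i : ℕ) :
    (node m a b i - a) / (b - a) = (i : ℝ) / m := by
  have hba : b - a ≠ 0 := by linarith
  rw [node, add_sub_cancel_left, mul_div_assoc, div_self hba, mul_one]

lemma bp_natDegree_le (m ν : ℕ) : (bernsteinPolynomial ℝ m ν).natDegree ≤ m := by
  rcases le_or_gt ν m with h | h
  · rw [bernsteinPolynomial]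
    calc ((m.choose ν : ℝ[X]) * Polynomial.X ^ ν * (1 - Polynomial.X) ^ (m - ν)).natDegree
        ≤ ((m.choose ν : ℝ[X]) * Polynomial.X ^ ν).natDegree
            + ((1 - Polynomial.X : ℝ[X]) ^ (m - ν)).natDegree := Polynomial.natDegree_mul_le
      _ ≤ (((m.choose ν : ℝ[X])).natDegree + (Polynomial.X ^ ν : ℝ[X]).natDegree)
            + (m - ν) * (1 - Polynomial.X : ℝ[X]).natDegree := by
          gcongr
          · exact Polynomial.natDegree_mul_le
          · exact Polynomial.natDegree_pow_le
      _ ≤ (0 + ν) + (m - ν) * 1 := by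
          gcongr
          · exact le_of_eq (Polynomial.natDegree_natCast _)
          · exact le_of_eq (Polynomial.natDegree_X_pow _)
          · exact le_trans (Polynomial.natDegree_sub_le _ _) (by simp)
      _ ≤ m := by omega
  · rw [bernsteinPolynomial.eq_zero_of_lt ℝ h]
    simp

lemma bp_coeff_lt (m : ℕ) {ν k : ℕ} (h : k < ν) : (bernsteinPolynomial ℝ m ν).coeff k = 0 := by
  rw [bernsteinPolynomial]
  rw [mul_comm ((m.choose ν : ℝ[X]) * Polynomial.X ^ ν) _, ← mul_assoc,
    Polynomial.coeff_mul_X_pow', if_neg (by omega)]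

lemma bp_coeff_self (m ν : ℕ) : (bernsteinPolynomial ℝ m ν).coeff ν = (m.choose ν : ℝ) := by
  rw [bernsteinPolynomial]
  rw [mul_comm ((m.choose ν : ℝ[X]) * Polynomial.X ^ ν) _, ← mul_assoc,
    Polynomial.coeff_mul_X_pow', if_pos le_rfl]
  simp only [Nat.sub_self]
  rw [Polynomial.coeff_zero_eq_eval_zero]
  simp

lemma Tmat_det_ne {a b : ℝ} (hab : a < b) {m : ℕ} (hm : 0 < m) :
    (Tmat m a b).det ≠ 0 := by
  intro hdet
  obtain ⟨v, hv, hvz⟩ := (Matrix.exists_mulVec_eq_zero_iff).mpr hdet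
  set P : Polynomial ℝ := ∑ j : Fin (m + 1), (v j) • bernsteinPolynomial ℝ m j with hP
  have hdeg : P.natDegree < m + 1 := by
    have : P.natDegree ≤ m := by
      apply Polynomial.natDegree_sum_le_of_forall_le
      intro j _
      exact le_trans (Polynomial.natDegree_smul_le _ _) (bp_natDegree_le m j)
    omega
  have hmr : (m : ℝ) ≠ 0 := Nat.cast_ne_zero.mpr (by omega)
  have hinj : Function.Injective (fun i : Fin (m + 1) => (i : ℝ) / m) := by
    intro i j hij
    simp only [div_eq_div_iff hmr hmr] at hij
    have h2 : ((i : ℕ) : ℝ) = ((j : ℕ) : ℝ) := mul_right_cancel₀ hmr hij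
    exact Fin.ext (by exact_mod_cast h2)
  have heval : ∀ i : Fin (m + 1), P.eval ((i : ℝ) / m) = 0 := by
    intro i
    have h0 := congrFun hvz i
    have h1 : (Tmat m a b).mulVec v i = ∑ j : Fin (m + 1),
        v j * (bernsteinPolynomial ℝ m j).eval ((i : ℝ) / m) := by
      rw [Matrix.mulVec, dotProduct]
      refine Finset.sum_congr rfl fun j _ => ?_
      rw [Tmat, bern_eval hab, node_s hab]
      ring
    rw [hP, Polynomial.eval_finset_sum]
    simp only [Polynomial.eval_smul, smul_eq_mul]
    rw [← h1, h0]
    rfl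
  have hPz : P = 0 := Polynomial.eq_zero_of_natDegree_lt_card_of_eval_eq_zero P hinj heval
    (by simpa using hdeg)
  apply hv
  funext j0
  have hall : ∀ t : ℕ, ∀ j0 : Fin (m + 1), j0.1 = t → v j0 = 0 := by
    intro t
    induction t using Nat.strong_induction_on with
    | _ t ih =>
      intro j0 hj0
      have hc : P.coeff j0.1 = 0 := by rw [hPz]; simp
      rw [hP, Polynomial.finset_sum_coeff] at hc
      have hsplit : ∀ j : Fin (m + 1), (v j • bernsteinPolynomial ℝ m j).coeff j0.1
          = if j = j0 then v j0 * (m.choose j0.1 : ℝ) else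
            (if j.1 < j0.1 then v j * (bernsteinPolynomial ℝ m j).coeff j0.1 else 0) := by
        intro j
        rcases Nat.lt_trichotomy j.1 j0.1 with h | h | h
        · rw [if_neg (fun hh => by subst hh; omega), if_pos h, Polynomial.coeff_smul,
            smul_eq_mul]
        · have : j = j0 := Fin.ext h
          subst this
          rw [if_pos rfl, Polynomial.coeff_smul, smul_eq_mul, bp_coeff_self]
        · rw [if_neg (fun hh => by subst hh; omega), if_neg (by omega),
            Polynomial.coeff_smul, smul_eq_mul, bp_coeff_lt m h, mul_zero]
      rw [Finset.sum_congr rfl (fun j _ => hsplit j)] at hc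
      have hz2 : ∀ j : Fin (m + 1), (if j.1 < j0.1 then
          v j * (bernsteinPolynomial ℝ m j.1).coeff j0.1 else 0) = 0 := by
        intro j
        by_cases h : j.1 < j0.1
        · rw [if_pos h, ih j.1 (by omega) j rfl, zero_mul]
        · rw [if_neg h]
      have hstep : ∀ j : Fin (m + 1), (if j = j0 then v j0 * (m.choose j0.1 : ℝ)
          else if j.1 < j0.1 then v j * (bernsteinPolynomial ℝ m j.1).coeff j0.1 else 0)
          = if j = j0 then v j0 * (m.choose j0.1 : ℝ) else 0 := by
        intro j
        by_cases h : j = j0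
        · simp [h]
        · rw [if_neg h, if_neg h]
          exact hz2 j
      rw [Finset.sum_congr rfl (fun j _ => hstep j),
        Finset.sum_ite_eq' Finset.univ j0 (fun _ => v j0 * (m.choose j0.1 : ℝ))] at hc
      simp only [Finset.mem_univ, if_true] at hc
      have hch : (m.choose j0.1 : ℝ) ≠ 0 :=
        Nat.cast_ne_zero.mpr (Nat.choose_pos (Nat.lt_succ_iff.mp j0.2)).ne'
      exact (mul_eq_zero.mp hc).resolve_right hch
  exact hall j0.1 j0 rfl

def elev (mk M t j : ℕ) : ℝ :=
  if j ≤ t then (mk.choose j : ℝ) * ((M - mk).choose (t - j) : ℝ) / (M.choose t : ℝ) else 0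

lemma elev_eval (mk M : ℕ) (hkM : mk ≤ M) (j : ℕ) (hj : j ≤ mk) (s : ℝ) :
    ∑ t : Fin (M + 1), elev mk M t.1 j * (bernsteinPolynomial ℝ M t.1).eval s
      = (bernsteinPolynomial ℝ mk j).eval s := by
  set N := M - mk with hN
  rw [Fin.sum_univ_eq_sum_range (fun t => elev mk M t j * (bernsteinPolynomial ℝ M t).eval s)]
  have h1 : ∑ t ∈ Finset.range (M + 1), elev mk M t j * (bernsteinPolynomial ℝ M t).eval s
      = ∑ t ∈ Finset.Ico j (M + 1), elev mk M t j * (bernsteinPolynomial ℝ M t).eval s := by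
    refine (Finset.sum_subset (by intro t ht; simp at ht ⊢; omega) ?_).symm
    intro t ht hnt
    simp only [Finset.mem_range] at ht
    simp only [Finset.mem_Ico] at hnt
    rw [elev, if_neg (by omega), zero_mul]
  rw [h1, Finset.sum_Ico_eq_sum_range]
  have h2 : ∑ u ∈ Finset.range (M + 1 - j), elev mk M (j + u) j
        * (bernsteinPolynomial ℝ M (j + u)).eval s
      = ∑ u ∈ Finset.range (N + 1), elev mk M (j + u) j
        * (bernsteinPolynomial ℝ M (j + u)).eval s := by
    refine (Finset.sum_subset (by intro u hu; simp at hu ⊢; omega) ?_).symm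
    intro u hu hnu
    simp only [Finset.mem_range] at hu hnu
    rw [elev, if_pos (by omega)]
    have h5 : j + u - j = u := by omega
    rw [h5, Nat.choose_eq_zero_of_lt (show N < u by omega)]
    simp
  rw [h2]
  have h3 : ∀ u ∈ Finset.range (N + 1), elev mk M (j + u) j
        * (bernsteinPolynomial ℝ M (j + u)).eval s
      = ((mk.choose j : ℝ) * s ^ j * (1 - s) ^ (mk - j))
        * ((N.choose u : ℝ) * s ^ u * (1 - s) ^ (N - u)) := by
    intro u hu
    simp only [Finset.mem_range] at hu
    rw [elev, if_pos (by omega), bp_eval]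
    have hju : (j + u) - j = u := by omega
    have hMj : M - (j + u) = (mk - j) + (N - u) := by omega
    have hch : (M.choose (j + u) : ℝ) ≠ 0 :=
      Nat.cast_ne_zero.mpr (Nat.choose_pos (by omega)).ne'
    rw [hju, hMj, pow_add, pow_add]
    field_simp
    ring
  rw [Finset.sum_congr rfl h3, ← Finset.mul_sum, bp_eval]
  have h4 : ∑ u ∈ Finset.range (N + 1), (N.choose u : ℝ) * s ^ u * (1 - s) ^ (N - u)
      = (s + (1 - s)) ^ N := by
    rw [add_pow]
    refine Finset.sum_congr rfl fun u _ => ?_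
    ring
  rw [h4]
  simp








lemma lam_sum {ι : Type*} (S : Finset ι) (m : ℕ) (a b : ℝ) (t : Fin (m + 1))
    (c : ι → ℝ) (g : ι → ℝ → ℝ) :
    lam m a b t (fun x => ∑ l ∈ S, c l * g l x) = ∑ l ∈ S, c l * lam m a b t (g l) := by
  unfold lam Matrix.mulVec dotProduct
  simp only []
  simp_rw [Finset.mul_sum]
  rw [Finset.sum_comm]
  refine Finset.sum_congr rfl fun l _ => ?_
  exact Finset.sum_congr rfl fun i _ => by ring

lemma lam_elev {a b : ℝ} (hab : a < b) {mk M : ℕ} (hM : 0 < M) (hkM : mk ≤ M)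
    {j : ℕ} (hj : j ≤ mk) (t : Fin (M + 1)) :
    lam M a b t (bern mk a b j) = elev mk M t.1 j := by
  have hdet := Tmat_det_ne hab hM
  have hunit : IsUnit (Tmat M a b).det := isUnit_iff_ne_zero.mpr hdet
  have hTe : (Tmat M a b).mulVec (fun t : Fin (M + 1) => elev mk M t.1 j)
      = fun i : Fin (M + 1) => bern mk a b j (node M a b i) := by
    funext i
    rw [Matrix.mulVec, dotProduct]
    rw [bern_eval hab, ← elev_eval mk M hkM j hj ((node M a b i - a) / (b - a))]
    refine Finset.sum_congr rfl fun tt _ => ?_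
    rw [Tmat, bern_eval hab]
    ring
  have h2 : lam M a b t (bern mk a b j)
      = ((Tmat M a b)⁻¹.mulVec ((Tmat M a b).mulVec
          (fun t : Fin (M + 1) => elev mk M t.1 j))) t := by
    rw [lam, hTe]
  rw [h2, Matrix.mulVec_mulVec, Matrix.nonsing_inv_mul _ hunit, Matrix.one_mulVec]

lemma alpha_val {mk M : ℕ} (hmk : 0 < mk) (hdvd : mk ∣ M) (i : Fin (mk + 1)) :
    (alphaF mk M i).1 = i.1 * (M / mk) := by
  have h1 : mk * (M / mk) = M := Nat.mul_div_cancel' hdvd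
  have h2 : i.1 ≤ mk := Nat.lt_succ_iff.mp i.2
  have h3 : i.1 * (M / mk) ≤ M := by
    calc i.1 * (M / mk) ≤ mk * (M / mk) := Nat.mul_le_mul_right _ h2
      _ = M := h1
  rw [alphaF]
  simp only [min_eq_left h3]

lemma elev_ent (mk M t j : ℕ) :
    elev mk M t j = (mk.choose j : ℝ) / (M.choose t : ℝ) * ent (M - mk) t j := by
  rw [elev, ent]
  by_cases h : j ≤ t
  · rw [if_pos h, if_pos h]; ring
  · rw [if_neg h, if_neg h]; ring

lemma Esub_apply {a b : ℝ} (hab : a < b) {mk M : ℕ} (hmk : 0 < mk) (hdvd : mk ∣ M)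
    (hM : 0 < M) (i j : Fin (mk + 1)) :
    Esub mk M a b i j
      = (mk.choose j.1 : ℝ) / (M.choose (i.1 * (M / mk)) : ℝ)
        * ent (M - mk) (i.1 * (M / mk)) j.1 := by
  have hkM : mk ≤ M := Nat.le_of_dvd hM hdvd
  rw [Esub, Emat, lam_elev hab hM hkM (Nat.lt_succ_iff.mp j.2), alpha_val hmk hdvd, elev_ent]

lemma Esub_det_ne {a b : ℝ} (hab : a < b) {mk M : ℕ} (hmk : 0 < mk) (hdvd : mk ∣ M)
    (hM : 0 < M) : (Esub mk M a b).det ≠ 0 := by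
  set q := M / mk with hq
  have hmulq : mk * q = M := Nat.mul_div_cancel' hdvd
  have hkM : mk ≤ M := Nat.le_of_dvd hM hdvd
  have hq1 : 1 ≤ q := (Nat.one_le_div_iff hmk).mpr hkM
  have hN : M - mk = mk * (q - 1) := by
    have : mk * (q - 1) + mk * 1 = mk * q := by rw [← Nat.mul_add]; congr 1; omega
    omega
  have hEs : Esub mk M a b = Matrix.of fun i j : Fin (mk + 1) =>
      (mk.choose j.1 : ℝ) * (((M.choose (i.1 * q) : ℝ))⁻¹
        * ent (M - mk) (i.1 * q) j.1) := by
    ext i j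
    rw [Esub_apply hab hmk hdvd hM]
    rw [Matrix.of_apply]
    ring
  rw [hEs, Matrix.det_mul_row (fun j : Fin (mk + 1) => (mk.choose j.1 : ℝ))
    (fun i j : Fin (mk + 1) => ((M.choose (i.1 * q) : ℝ))⁻¹ * ent (M - mk) (i.1 * q) j.1)]
  have h2 : (Matrix.det fun i j : Fin (mk + 1) =>
      ((M.choose (i.1 * q) : ℝ))⁻¹ * ent (M - mk) (i.1 * q) j.1)
      = (∏ i : Fin (mk + 1), ((M.choose (i.1 * q) : ℝ))⁻¹)
        * (Amat (M - mk) (fun i : Fin (mk + 1) => i.1 * q)).det :=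
    Matrix.det_mul_column (fun i : Fin (mk + 1) => ((M.choose (i.1 * q) : ℝ))⁻¹)
      (Amat (M - mk) (fun i : Fin (mk + 1) => i.1 * q))
  rw [h2]
  have hA : (1 : ℝ) ≤ (Amat (M - mk) (fun i : Fin (mk + 1) => i.1 * q)).det := by
    rw [hN]; exact amat_pos mk q hq1
  have hp1 : (0 : ℝ) < ∏ i : Fin (mk + 1), (mk.choose i.1 : ℝ) := by
    apply Finset.prod_pos
    intro i _
    exact_mod_cast Nat.choose_pos (Nat.lt_succ_iff.mp i.2)
  have hp2 : (0 : ℝ) < ∏ i : Fin (mk + 1), ((M.choose (i.1 * q) : ℝ))⁻¹ := by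
    apply Finset.prod_pos
    intro i _
    have : 0 < (M.choose (i.1 * q) : ℝ) := by
      exact_mod_cast Nat.choose_pos (by
        calc i.1 * q ≤ mk * q := Nat.mul_le_mul_right _ (Nat.lt_succ_iff.mp i.2)
          _ = M := hmulq)
    exact inv_pos.mpr this
  have : (0:ℝ) < (∏ i : Fin (mk + 1), (mk.choose i.1 : ℝ))
      * ((∏ i : Fin (mk + 1), ((M.choose (i.1 * q) : ℝ))⁻¹)
        * (Amat (M - mk) (fun i : Fin (mk + 1) => i.1 * q)).det) := by
    apply mul_pos hp1
    apply mul_pos hp2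
    linarith
  exact ne_of_gt this

section Master
variable {a b : ℝ} {M mk ml : ℕ}

lemma mu_dq (hab : a < b) (hmk : 0 < mk) (hdvd : mk ∣ M) (hM : 0 < M)
    (i j : Fin (mk + 1)) :
    mu mk M a b i (Dq mk M a b j) = if i = j then 1 else 0 := by
  have hunit : IsUnit (Esub mk M a b).det :=
    isUnit_iff_ne_zero.mpr (Esub_det_ne hab hmk hdvd hM)
  have h1 : mu mk M a b i (Dq mk M a b j)
      = ∑ l : Fin (mk + 1), (Esub mk M a b)⁻¹ l j
          * lam M a b (alphaF mk M i) (bern mk a b l.1) := by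
    exact lam_sum Finset.univ M a b (alphaF mk M i)
      (fun l => (Esub mk M a b)⁻¹ l j) (fun l => bern mk a b l.1)
  rw [h1]
  have h3 : ∑ l : Fin (mk + 1), (Esub mk M a b)⁻¹ l j
        * lam M a b (alphaF mk M i) (bern mk a b l.1)
      = (Esub mk M a b * (Esub mk M a b)⁻¹) i j := by
    rw [Matrix.mul_apply]
    exact Finset.sum_congr rfl fun l _ => by rw [mul_comm]; rfl
  rw [h3, Matrix.mul_nonsing_inv _ hunit, Matrix.one_apply]

lemma pop_bern (hab : a < b) (hmk : 0 < mk) (hdvd : mk ∣ M) (hM : 0 < M)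
    (s : Fin (mk + 1)) :
    Pop mk M a b (bern mk a b s.1) = bern mk a b s.1 := by
  have hunit : IsUnit (Esub mk M a b).det :=
    isUnit_iff_ne_zero.mpr (Esub_det_ne hab hmk hdvd hM)
  funext x
  show ∑ i : Fin (mk + 1), mu mk M a b i (bern mk a b s.1) * Dq mk M a b i x = _
  have hmu : ∀ i, mu mk M a b i (bern mk a b s.1) = Esub mk M a b i s := fun i => rfl
  have h1 : ∑ i : Fin (mk + 1), mu mk M a b i (bern mk a b s.1) * Dq mk M a b i x
      = ∑ l : Fin (mk + 1), ((Esub mk M a b)⁻¹ * Esub mk M a b) l s * bern mk a b l.1 x := by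
    simp_rw [hmu, Dq, Finset.mul_sum]
    rw [Finset.sum_comm]
    refine Finset.sum_congr rfl fun l _ => ?_
    rw [Matrix.mul_apply, Finset.sum_mul]
    exact Finset.sum_congr rfl fun i _ => by ring
  rw [h1, Matrix.nonsing_inv_mul _ hunit]
  simp [Matrix.one_apply]

lemma pop_sum {ι : Type*} (S : Finset ι) (c : ι → ℝ) (g : ι → ℝ → ℝ) :
    Pop mk M a b (fun x => ∑ l ∈ S, c l * g l x)
      = fun x => ∑ l ∈ S, c l * Pop mk M a b (g l) x := by
  funext x
  show ∑ i : Fin (mk + 1), mu mk M a b i (fun x => ∑ l ∈ S, c l * g l x) * Dq mk M a b i x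
    = ∑ l ∈ S, c l * Pop mk M a b (g l) x
  have hmu : ∀ i : Fin (mk + 1), mu mk M a b i (fun x => ∑ l ∈ S, c l * g l x)
      = ∑ l ∈ S, c l * mu mk M a b i (g l) := fun i => lam_sum S M a b (alphaF mk M i) c g
  simp_rw [hmu, Finset.sum_mul]
  rw [Finset.sum_comm]
  refine Finset.sum_congr rfl fun l _ => ?_
  show _ = c l * ∑ i : Fin (mk + 1), mu mk M a b i (g l) * Dq mk M a b i x
  rw [Finset.mul_sum]
  exact Finset.sum_congr rfl fun i _ => by ring

lemma bern_elev (hab : a < b) (hlk : ml ≤ mk) {s : ℕ} (hs : s ≤ ml) (x : ℝ) :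
    bern ml a b s x = ∑ t : Fin (mk + 1), elev ml mk t.1 s * bern mk a b t.1 x := by
  rw [bern_eval hab, ← elev_eval ml mk hlk s hs ((x - a) / (b - a))]
  exact Finset.sum_congr rfl fun t _ => by rw [bern_eval hab]

lemma pop_bern_lower (hab : a < b) (hml : 0 < ml) (hmk : 0 < mk) (hdl : ml ∣ mk)
    (hdvd : mk ∣ M) (hM : 0 < M) (s : Fin (ml + 1)) :
    Pop mk M a b (bern ml a b s.1) = bern ml a b s.1 := by
  have hle : ml ≤ mk := Nat.le_of_dvd hmk hdl
  have h4 : bern ml a b s.1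
      = fun x => ∑ t : Fin (mk + 1), elev ml mk t.1 s.1 * bern mk a b t.1 x :=
    funext fun x => bern_elev hab hle (Nat.lt_succ_iff.mp s.2) x
  rw [h4, pop_sum]
  refine funext fun x => ?_
  show (∑ t : Fin (mk + 1), elev ml mk t.1 s.1 * Pop mk M a b (bern mk a b t.1) x)
      = ∑ t : Fin (mk + 1), elev ml mk t.1 s.1 * bern mk a b t.1 x
  refine Finset.sum_congr rfl fun t _ => ?_
  rw [pop_bern hab hmk hdvd hM]

lemma pop_dq (hab : a < b) (hml : 0 < ml) (hmk : 0 < mk) (hdl : ml ∣ mk)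
    (hdvd : mk ∣ M) (hM : 0 < M) (j : Fin (ml + 1)) :
    Pop mk M a b (Dq ml M a b j) = Dq ml M a b j := by
  have h0 : Dq ml M a b j
      = fun x => ∑ l : Fin (ml + 1), (Esub ml M a b)⁻¹ l j * bern ml a b l.1 x := rfl
  rw [h0, pop_sum]
  funext x
  refine Finset.sum_congr rfl fun l _ => ?_
  rw [pop_bern_lower hab hml hmk hdl hdvd hM]

lemma pop_chain (hab : a < b) (hml : 0 < ml) (hmk : 0 < mk) (hdl : ml ∣ mk)
    (hdk : mk ∣ M) (hM : 0 < M) (f : ℝ → ℝ) :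
    Pop mk M a b (Pop ml M a b f) = Pop ml M a b f ∧
    Pop ml M a b (Pop mk M a b f) = Pop ml M a b f := by
  have hdlM : ml ∣ M := dvd_trans hdl hdk
  constructor
  · have hPl : Pop ml M a b f
        = fun x => ∑ i : Fin (ml + 1), mu ml M a b i f * Dq ml M a b i x := rfl
    rw [hPl, pop_sum]
    funext x
    refine Finset.sum_congr rfl fun i _ => ?_
    rw [pop_dq hab hml hmk hdl hdk hM]
  · have hu : ml * (mk / ml) = mk := Nat.mul_div_cancel' hdl
    have hv : mk * (M / mk) = M := Nat.mul_div_cancel' hdk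
    have hMl : M / ml = (mk / ml) * (M / mk) := by
      have hmm : M = ml * ((mk / ml) * (M / mk)) := by rw [← mul_assoc, hu, hv]
      exact Nat.div_eq_of_eq_mul_left hml (by rw [mul_comm]; exact hmm)
    have hi'lt : ∀ i : Fin (ml + 1), i.1 * (mk / ml) < mk + 1 := by
      intro i
      have h2 : i.1 ≤ ml := Nat.lt_succ_iff.mp i.2
      have : i.1 * (mk / ml) ≤ ml * (mk / ml) := Nat.mul_le_mul_right _ h2
      omega
    funext x
    show ∑ i : Fin (ml + 1), mu ml M a b i (Pop mk M a b f) * Dq ml M a b i x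
      = ∑ i : Fin (ml + 1), mu ml M a b i f * Dq ml M a b i x
    refine Finset.sum_congr rfl fun i _ => ?_
    congr 1
    set i' : Fin (mk + 1) := ⟨i.1 * (mk / ml), hi'lt i⟩ with hi'
    have hidx : alphaF ml M i = alphaF mk M i' := by
      apply Fin.ext
      rw [alpha_val hml hdlM, alpha_val hmk hdk, hMl, hi']
      simp only [← mul_assoc]
    have hswap : ∀ g : ℝ → ℝ, mu ml M a b i g = mu mk M a b i' g := by
      intro g
      rw [mu, mu, hidx]
    rw [hswap, hswap]
    have hPk : Pop mk M a b f
        = fun x => ∑ j : Fin (mk + 1), mu mk M a b j f * Dq mk M a b j x := rfl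
    rw [show mu mk M a b i' (Pop mk M a b f)
        = ∑ j : Fin (mk + 1), mu mk M a b j f * mu mk M a b i' (Dq mk M a b j) from by
      rw [mu, hPk]
      exact lam_sum Finset.univ M a b _ _ _]
    simp_rw [mu_dq hab hmk hdk hM, mul_ite, mul_one, mul_zero]
    rw [Finset.sum_ite_eq]
    simp

end Master

end AuxChain

/-- Chain relations: for `ℓ ≤ k ≤ r`,
`P_{m_k}P_{m_ℓ} = P_{m_ℓ} = P_{m_ℓ}P_{m_k}` on `C[a,b]`, and likewise for the `Q`'s. -/
theorem stmt6 (a b c d : ℝ) (hab : a < b) (hcd : c < d) (r : ℕ) (m n : ℕ → ℕ)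
    (hm0 : 0 < m 0) (hn0 : 0 < n 0)
    (hmi : ∀ k < r, m k < m (k + 1)) (hni : ∀ k < r, n k < n (k + 1))
    (hmd : ∀ k < r, m k ∣ m (k + 1)) (hnd : ∀ k < r, n k ∣ n (k + 1)) :
    ∀ l k : ℕ, l ≤ k → k ≤ r →
      (∀ f : ℝ → ℝ, ContinuousOn f (Set.Icc a b) →
        Pop (m k) (m r) a b (Pop (m l) (m r) a b f) = Pop (m l) (m r) a b f ∧
        Pop (m l) (m r) a b (Pop (m k) (m r) a b f) = Pop (m l) (m r) a b f) ∧
      (∀ g : ℝ → ℝ, ContinuousOn g (Set.Icc c d) →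
        Pop (n k) (n r) c d (Pop (n l) (n r) c d g) = Pop (n l) (n r) c d g ∧
        Pop (n l) (n r) c d (Pop (n k) (n r) c d g) = Pop (n l) (n r) c d g) := by
  have hposm : ∀ k, k ≤ r → 0 < m k := by
    intro k
    induction k with
    | zero => intro _; exact hm0
    | succ k ih => intro h; have h1 := hmi k (by omega); have := ih (by omega); omega
  have hposn : ∀ k, k ≤ r → 0 < n k := by
    intro k
    induction k with
    | zero => intro _; exact hn0
    | succ k ih => intro h; have h1 := hni k (by omega); have := ih (by omega); omega
  have hdvdm : ∀ l k, l ≤ k → k ≤ r → m l ∣ m k := by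
    intro l k
    induction k with
    | zero =>
      intro h _
      have hl : l = 0 := by omega
      exact hl ▸ dvd_rfl
    | succ k ih =>
        intro hlk hkr
        rcases Nat.lt_or_ge l (k + 1) with h | h
        · exact dvd_trans (ih (by omega) (by omega)) (hmd k (by omega))
        · have : l = k + 1 := by omega
          subst this; exact dvd_rfl
  have hdvdn : ∀ l k, l ≤ k → k ≤ r → n l ∣ n k := by
    intro l k
    induction k with
    | zero =>
      intro h _
      have hl : l = 0 := by omega
      exact hl ▸ dvd_rfl
    | succ k ih =>
        intro hlk hkr
        rcases Nat.lt_or_ge l (k + 1) with h | h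
        · exact dvd_trans (ih (by omega) (by omega)) (hnd k (by omega))
        · have : l = k + 1 := by omega
          subst this; exact dvd_rfl
  intro l k hlk hkr
  constructor
  · intro f _
    exact pop_chain hab (hposm l (le_trans hlk hkr)) (hposm k hkr)
      (hdvdm l k hlk hkr) (hdvdm k r hkr le_rfl) (hposm r le_rfl) f
  · intro g _
    exact pop_chain hcd (hposn l (le_trans hlk hkr)) (hposn k hkr)
      (hdvdn l k hlk hkr) (hdvdn k r hkr le_rfl) (hposn r le_rfl) g
end

section
/- For each k = 0,…,r and every f ∈ C[a,b], ‖P_{m_k} f‖_{∞,[a,b]} ≤ C_{m_r,m_k}·‖f‖_{∞,[a,b]}, where C_{m_r,m_k} := C_{m_r}·(m_k+1)·‖E_{m_k}^{m_r}(α^k,:)^{−1}‖_∞, with C_{m_r} := max_{0≤i≤m_r} sup{ |λ_i^{m_r} f| : f ∈ C[a,b], ‖f‖_{∞,[a,b]} ≤ 1 }, E_{m_k}^{m_r} the degree elevation matrix with entries λ_i^{m_r}(B_j^{m_k}), E_{m_k}^{m_r}(α^k,:) its row-submatrix indexed by α^k (which is invertible), and ‖·‖_∞ the maximum absolute row sum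 matrix norm. The analogous bound ‖Q_{n_k} g‖_{∞,[c,d]} ≤ C_{n_r,n_k}·‖g‖_{∞,[c,d]} holds for all g ∈ C[c,d]. -/
open scoped BigOperators

section Aux

open Finset

lemma bern_mem_Icc {a b : ℝ} (hab : a < b) {x : ℝ} (hx : x ∈ Set.Icc a b)
    (m i : ℕ) : bern m a b i x ∈ Set.Icc (0 : ℝ) 1 := by
  have hba : (0:ℝ) < b - a := sub_pos.2 hab
  set s : ℝ := (b - x) / (b - a) with hs
  set t : ℝ := (x - a) / (b - a) with ht
  have hs0 : 0 ≤ s := div_nonneg (by linarith [hx.2]) hba.le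
  have ht0 : 0 ≤ t := div_nonneg (by linarith [hx.1]) hba.le
  have hst : t + s = 1 := by
    rw [hs, ht, ← add_div, div_eq_one_iff_eq hba.ne']
    ring
  have hsum : ∑ k ∈ Finset.range (m + 1), t ^ k * s ^ (m - k) * (m.choose k : ℝ) = 1 := by
    have h := add_pow t s m
    rw [hst, one_pow] at h
    exact h.symm
  have hterm : ∀ k ∈ Finset.range (m + 1), 0 ≤ t ^ k * s ^ (m - k) * (m.choose k : ℝ) :=
    fun k _ => by positivity
  constructor
  · exact mul_nonneg (mul_nonneg (by positivity) (by positivity)) (by positivity)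
  · by_cases him : i ≤ m
    · have hi : i ∈ Finset.range (m + 1) := Finset.mem_range.2 (Nat.lt_succ_of_le him)
      have := Finset.single_le_sum hterm hi
      rw [hsum] at this
      calc bern m a b i x = t ^ i * s ^ (m - i) * (m.choose i : ℝ) := by
            simp only [bern, ← hs, ← ht]; ring
        _ ≤ 1 := this
    · have : m.choose i = 0 := Nat.choose_eq_zero_of_lt (Nat.lt_of_not_le him)
      simp [bern, this]

lemma node_mem_Icc {a b : ℝ} (hab : a < b) (m : ℕ) (i : Fin (m + 1)) :
    node m a b i ∈ Set.Icc a b := by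
  have hba : (0:ℝ) < b - a := sub_pos.2 hab
  have h0 : 0 ≤ (i : ℝ) / (m : ℝ) := by positivity
  have h1 : (i : ℝ) / (m : ℝ) ≤ 1 := by
    rcases Nat.eq_zero_or_pos m with hm | hm
    · subst hm
      have : (i : ℕ) = 0 := Nat.lt_one_iff.1 i.2
      simp [this]
    · rw [div_le_one (by exact_mod_cast hm)]
      exact_mod_cast Nat.lt_succ_iff.1 i.2
  constructor
  · have := mul_nonneg h0 hba.le
    simp only [node]; linarith
  · have h2 : (i : ℝ) / (m : ℝ) * (b - a) ≤ 1 * (b - a) :=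
      mul_le_mul_of_nonneg_right h1 hba.le
    simp only [node]; linarith

lemma supN_nonneg {α : Type*} (S : Set α) (f : α → ℝ) : 0 ≤ supN S f :=
  Real.iSup_nonneg fun z => abs_nonneg _

lemma bddAbove_abs_of_continuousOn {a b : ℝ} {f : ℝ → ℝ}
    (hf : ContinuousOn f (Set.Icc a b)) :
    BddAbove (Set.range fun z : (Set.Icc a b) => |f z.1|) := by
  obtain ⟨C, hC⟩ := isCompact_Icc.exists_bound_of_continuousOn hf
  exact ⟨C, by rintro y ⟨z, rfl⟩; simpa [Real.norm_eq_abs] using hC z.1 z.2⟩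

lemma le_supN {a b : ℝ} {f : ℝ → ℝ} (hf : ContinuousOn f (Set.Icc a b))
    {z : ℝ} (hz : z ∈ Set.Icc a b) : |f z| ≤ supN (Set.Icc a b) f :=
  le_ciSup (bddAbove_abs_of_continuousOn hf) (⟨z, hz⟩ : Set.Icc a b)

lemma lam_eq_sum (m : ℕ) (a b : ℝ) (j : Fin (m + 1)) (f : ℝ → ℝ) :
    lam m a b j f = ∑ i, (Tmat m a b)⁻¹ j i * f (node m a b i) := by
  simp [lam, Matrix.mulVec, dotProduct]

lemma Cbase_nonneg (m : ℕ) (a b : ℝ) : 0 ≤ Cbase m a b :=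
  Real.iSup_nonneg fun i => Real.iSup_nonneg fun f => abs_nonneg _

lemma rowNorm_nonneg {p q : ℕ} (A : Matrix (Fin p) (Fin q) ℝ) : 0 ≤ rowNorm A :=
  Real.iSup_nonneg fun i => Finset.sum_nonneg fun j _ => abs_nonneg _

lemma sum_le_rowNorm {p q : ℕ} (A : Matrix (Fin p) (Fin q) ℝ) (i : Fin p) :
    ∑ j, |A i j| ≤ rowNorm A :=
  le_ciSup (f := fun i : Fin p => ∑ j, |A i j|) (Set.Finite.bddAbove (Set.finite_range _)) i

lemma lam_le_Cbase {a b : ℝ} (hab : a < b) (m : ℕ) (j : Fin (m + 1))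
    (g : ℝ → ℝ) (hg : ContinuousOn g (Set.Icc a b)) (hg1 : supN (Set.Icc a b) g ≤ 1) :
    |lam m a b j g| ≤ Cbase m a b := by
  have key : ∀ (i : Fin (m + 1))
      (f : {f : ℝ → ℝ // ContinuousOn f (Set.Icc a b) ∧ supN (Set.Icc a b) f ≤ 1}),
      |lam m a b i f.1| ≤ ∑ i', |(Tmat m a b)⁻¹ i i'| := by
    intro i f
    rw [lam_eq_sum]
    refine (Finset.abs_sum_le_sum_abs _ _).trans (Finset.sum_le_sum fun i' _ => ?_)
    rw [abs_mul]
    have hfv : |f.1 (node m a b i')| ≤ 1 :=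
      le_trans (le_supN f.2.1 (node_mem_Icc hab m i')) f.2.2
    calc |(Tmat m a b)⁻¹ i i'| * |f.1 (node m a b i')|
        ≤ |(Tmat m a b)⁻¹ i i'| * 1 :=
          mul_le_mul_of_nonneg_left hfv (abs_nonneg _)
      _ = |(Tmat m a b)⁻¹ i i'| := mul_one _
  have h1 : |lam m a b j g| ≤
      ⨆ f : {f : ℝ → ℝ // ContinuousOn f (Set.Icc a b) ∧ supN (Set.Icc a b) f ≤ 1},
        |lam m a b j f.1| := by
    refine le_ciSup
      (f := fun f : {f : ℝ → ℝ // ContinuousOn f (Set.Icc a b) ∧ supN (Set.Icc a b) f ≤ 1} =>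
        |lam m a b j f.1|)
      (⟨∑ i', |(Tmat m a b)⁻¹ j i'|, ?_⟩ : BddAbove _)
      (⟨g, hg, hg1⟩ : {f : ℝ → ℝ // ContinuousOn f (Set.Icc a b) ∧ supN (Set.Icc a b) f ≤ 1})
    rintro y ⟨f, rfl⟩
    exact key j f
  refine h1.trans ?_
  refine le_ciSup (f := fun i : Fin (m+1) =>
    ⨆ f : {f : ℝ → ℝ // ContinuousOn f (Set.Icc a b) ∧ supN (Set.Icc a b) f ≤ 1},
      |lam m a b i f.1|) (Set.Finite.bddAbove (Set.finite_range _)) j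

lemma abs_lam_le {a b : ℝ} (hab : a < b) (m : ℕ) (j : Fin (m + 1))
    (f : ℝ → ℝ) (hf : ContinuousOn f (Set.Icc a b)) :
    |lam m a b j f| ≤ Cbase m a b * supN (Set.Icc a b) f := by
  set M := supN (Set.Icc a b) f with hM
  have hM0 : 0 ≤ M := supN_nonneg _ _
  rcases eq_or_lt_of_le hM0 with hM0' | hMpos
  · have hzero : ∀ z ∈ Set.Icc a b, f z = 0 := by
      intro z hz
      have := le_supN hf hz
      rw [← hM, ← hM0'] at this
      exact abs_eq_zero.1 (le_antisymm this (abs_nonneg _))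
    have : lam m a b j f = 0 := by
      rw [lam_eq_sum]
      refine Finset.sum_eq_zero fun i _ => ?_
      rw [hzero _ (node_mem_Icc hab m i), mul_zero]
    rw [this, ← hM0', abs_zero, mul_zero]
  · set g : ℝ → ℝ := fun x => f x / M with hg
    have hgc : ContinuousOn g (Set.Icc a b) := hf.div_const M
    have hg1 : supN (Set.Icc a b) g ≤ 1 := by
      refine Real.iSup_le (fun z => ?_) zero_le_one
      have : |f z.1| ≤ M := le_supN hf z.2
      rw [hg]
      simp only [abs_div, abs_of_pos hMpos]
      exact div_le_one_of_le₀ this hM0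
    have heq : lam m a b j f = M * lam m a b j g := by
      rw [lam_eq_sum, lam_eq_sum, Finset.mul_sum]
      refine Finset.sum_congr rfl fun i _ => ?_
      rw [hg]
      field_simp
    rw [heq, abs_mul, abs_of_pos hMpos, mul_comm]
    exact mul_le_mul_of_nonneg_right (lam_le_Cbase hab m j g hgc hg1) hM0

lemma stab {a b : ℝ} (hab : a < b) (mk mr : ℕ)
    (f : ℝ → ℝ) (hf : ContinuousOn f (Set.Icc a b)) :
    supN (Set.Icc a b) (Pop mk mr a b f) ≤ Cconst mk mr a b * supN (Set.Icc a b) f := by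
  set M := supN (Set.Icc a b) f with hM
  have hM0 : 0 ≤ M := supN_nonneg _ _
  have hC0 : 0 ≤ Cbase mr a b * M := mul_nonneg (Cbase_nonneg _ _ _) hM0
  have hCconst : 0 ≤ Cconst mk mr a b * M := by
    refine mul_nonneg (mul_nonneg (mul_nonneg (Cbase_nonneg _ _ _) ?_) ?_) hM0
    · positivity
    · exact rowNorm_nonneg _
  refine Real.iSup_le (fun z => ?_) hCconst
  obtain ⟨x, hx⟩ := z
  have hDq : ∀ i : Fin (mk + 1), |Dq mk mr a b i x| ≤ ∑ l, |(Esub mk mr a b)⁻¹ l i| := by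
    intro i
    refine (Finset.abs_sum_le_sum_abs _ _).trans (Finset.sum_le_sum fun l _ => ?_)
    rw [abs_mul]
    have hb := bern_mem_Icc hab hx mk l
    have : |bern mk a b l x| ≤ 1 := abs_le.2 ⟨by linarith [hb.1], hb.2⟩
    calc |(Esub mk mr a b)⁻¹ l i| * |bern mk a b l x|
        ≤ |(Esub mk mr a b)⁻¹ l i| * 1 := mul_le_mul_of_nonneg_left this (abs_nonneg _)
      _ = _ := mul_one _
  have hmu : ∀ i : Fin (mk + 1), |mu mk mr a b i f| ≤ Cbase mr a b * M :=
    fun i => abs_lam_le hab mr (alphaF mk mr i) f hf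
  have hstep : |Pop mk mr a b f x| ≤
      ∑ i : Fin (mk + 1), (Cbase mr a b * M) * (∑ l, |(Esub mk mr a b)⁻¹ l i|) := by
    refine (Finset.abs_sum_le_sum_abs _ _).trans (Finset.sum_le_sum fun i _ => ?_)
    rw [abs_mul]
    exact mul_le_mul (hmu i) (hDq i) (abs_nonneg _) hC0
  refine hstep.trans ?_
  rw [← Finset.mul_sum]
  have hrow : ∑ i : Fin (mk + 1), ∑ l, |(Esub mk mr a b)⁻¹ l i| ≤
      ((mk : ℝ) + 1) * rowNorm (Esub mk mr a b)⁻¹ := by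
    rw [Finset.sum_comm]
    calc ∑ l : Fin (mk + 1), ∑ i, |(Esub mk mr a b)⁻¹ l i|
        ≤ ∑ _l : Fin (mk + 1), rowNorm (Esub mk mr a b)⁻¹ :=
          Finset.sum_le_sum fun l _ => sum_le_rowNorm _ l
      _ = ((mk : ℝ) + 1) * rowNorm (Esub mk mr a b)⁻¹ := by
          rw [Finset.sum_const, Finset.card_univ, Fintype.card_fin]
          push_cast; ring
  calc (Cbase mr a b * M) * ∑ i : Fin (mk + 1), ∑ l, |(Esub mk mr a b)⁻¹ l i|
      ≤ (Cbase mr a b * M) * (((mk : ℝ) + 1) * rowNorm (Esub mk mr a b)⁻¹) :=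
        mul_le_mul_of_nonneg_left hrow hC0
    _ = Cconst mk mr a b * M := by rw [Cconst]; ring

end Aux

/-- Stability bounds: `‖P_{m_k} f‖_{∞,[a,b]} ≤ C_{m_r,m_k}·‖f‖_{∞,[a,b]}`
with `C_{m_r,m_k} = C_{m_r}·(m_k+1)·‖E_{m_k}^{m_r}(α^k,:)⁻¹‖_∞`, and likewise for `Q_{n_k}`. -/
theorem stmt7 (a b c d : ℝ) (hab : a < b) (hcd : c < d) (r : ℕ) (m n : ℕ → ℕ)
    (hm0 : 0 < m 0) (hn0 : 0 < n 0)
    (hmi : ∀ k < r, m k < m (k + 1)) (hni : ∀ k < r, n k < n (k + 1))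
    (hmd : ∀ k < r, m k ∣ m (k + 1)) (hnd : ∀ k < r, n k ∣ n (k + 1)) :
    ∀ k ≤ r,
      (∀ f : ℝ → ℝ, ContinuousOn f (Set.Icc a b) →
        supN (Set.Icc a b) (Pop (m k) (m r) a b f) ≤
          Cconst (m k) (m r) a b * supN (Set.Icc a b) f) ∧
      (∀ g : ℝ → ℝ, ContinuousOn g (Set.Icc c d) →
        supN (Set.Icc c d) (Pop (n k) (n r) c d g) ≤
          Cconst (n k) (n r) c d * supN (Set.Icc c d) g) := by
  intro k hk
  exact ⟨fun f hf => stab hab (m k) (m r) f hf, fun g hg => stab hcd (n k) (n r) g hg⟩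
end
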